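/- arXiv:1008.1080 — 6 statements merged into one kernel-verified Lean document; each statement's English description precedes it below -/
import Mathlib

section
/- Let W be a group, r an involution in W, W⁺ ⊴ W of index 2 with r ∉ W⁺, M a normal subgroup of W⁺, and K a normal subgroup of W contained in W⁺. Set N = M ∩ K. Then the group (rNr⁻¹)/(N ∩ rNr⁻¹) is isomorphic to the group ((rMr⁻¹ ∩ K)·M)/M, which is a normal subgroup of (rMr⁻¹·M)/M. -/
/-- The conjugate subgroup `r M r⁻¹`. -/
def conjSub {W : Type} [Group W] (r : W) (M : Subgroup W) : Subgroup W :=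
  M.map (MulAut.conj r).toMonoidHom

lemma mem_conjSub {W : Type} [Group W] {r x : W} {M : Subgroup W} :
    x ∈ conjSub r M ↔ r⁻¹ * x * r ∈ M := by
  constructor
  · rintro ⟨y, hy, rfl⟩
    simpa [mul_assoc] using hy
  · intro h
    exact ⟨r⁻¹ * x * r, h, by simp [mul_assoc]⟩

lemma conjSub_normal_eq {W : Type} [Group W] (r : W) (K : Subgroup W) [K.Normal] :
    conjSub r K = K := by
  ext x
  rw [mem_conjSub]
  constructor
  · intro h
    simpa [mul_assoc] using Subgroup.Normal.conj_mem ‹K.Normal› _ h r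
  · intro h
    simpa [mul_assoc] using Subgroup.Normal.conj_mem ‹K.Normal› _ h r⁻¹

lemma conjSub_inf {W : Type} [Group W] (r : W) (M K : Subgroup W) :
    conjSub r (M ⊓ K) = conjSub r M ⊓ conjSub r K := by
  ext x
  simp [mem_conjSub, Subgroup.mem_inf]

/-- With `N = M ∩ K`, the chirality group of the mix, `(rNr⁻¹)/(N ∩ rNr⁻¹)`, is
isomorphic to `((rMr⁻¹ ∩ K)·M)/M`, which is a normal subgroup of `(rMr⁻¹·M)/M`. -/
theorem stmt_7 (W : Type) [Group W] (r : W) (hr : r ^ 2 = 1)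
    (Wp : Subgroup W) [Wp.Normal] (hWp : Wp.index = 2) (hrW : r ∉ Wp)
    (M K : Subgroup W) (hMle : M ≤ Wp) [(M.subgroupOf Wp).Normal]
    [K.Normal] (hKle : K ≤ Wp)
    [((M ⊓ K ⊓ conjSub r (M ⊓ K)).subgroupOf (conjSub r (M ⊓ K))).Normal]
    [(M.subgroupOf ((conjSub r M ⊓ K) ⊔ M)).Normal]
    [(M.subgroupOf (conjSub r M ⊔ M)).Normal] :
    Nonempty ((↥(conjSub r (M ⊓ K)) ⧸
          (M ⊓ K ⊓ conjSub r (M ⊓ K)).subgroupOf (conjSub r (M ⊓ K))) ≃*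
        (↥((conjSub r M ⊓ K) ⊔ M) ⧸ M.subgroupOf ((conjSub r M ⊓ K) ⊔ M))) ∧
    (Subgroup.map (QuotientGroup.mk' (M.subgroupOf (conjSub r M ⊔ M)))
        (((conjSub r M ⊓ K) ⊔ M).subgroupOf (conjSub r M ⊔ M))).Normal := by
  have hA : conjSub r (M ⊓ K) = conjSub r M ⊓ K := by
    rw [conjSub_inf, conjSub_normal_eq r K]
  set B : Subgroup W := conjSub r (M ⊓ K) with hBdef
  set A : Subgroup W := conjSub r M ⊓ K with hAdef
  set S : Subgroup W := A ⊔ M with hSdef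
  set T : Subgroup W := conjSub r M ⊔ M with hTdef
  have haS : A ≤ S := le_sup_left
  have hmS : M ≤ S := le_sup_right
  have hcT : conjSub r M ≤ T := le_sup_left
  have hmT : M ≤ T := le_sup_right
  have hBS : B ≤ S := hA ▸ haS
  have hAK : A ≤ K := inf_le_right
  have hMconjS : ∀ s ∈ S, ∀ m ∈ M, s * m * s⁻¹ ∈ M := by
    intro s hs m hm
    have := Subgroup.Normal.conj_mem ‹(M.subgroupOf S).Normal›
      ⟨m, hmS hm⟩ (by simpa [Subgroup.mem_subgroupOf] using hm) ⟨s, hs⟩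
    simpa [Subgroup.mem_subgroupOf] using this
  have hMconjT : ∀ s ∈ T, ∀ m ∈ M, s * m * s⁻¹ ∈ M := by
    intro s hs m hm
    have := Subgroup.Normal.conj_mem ‹(M.subgroupOf T).Normal›
      ⟨m, hmT hm⟩ (by simpa [Subgroup.mem_subgroupOf] using hm) ⟨s, hs⟩
    simpa [Subgroup.mem_subgroupOf] using this
  constructor
  · -- the isomorphism
    let f : ↥B →* ↥S ⧸ M.subgroupOf S :=
      (QuotientGroup.mk' (M.subgroupOf S)).comp (Subgroup.inclusion hBS)
    have hkerf : f.ker = (M ⊓ K ⊓ B).subgroupOf B := by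
      ext ⟨x, hx⟩
      have hxK : x ∈ K := hAK (hA ▸ hx)
      simp only [f, MonoidHom.mem_ker, MonoidHom.comp_apply, QuotientGroup.mk'_apply,
        QuotientGroup.eq_one_iff, Subgroup.mem_subgroupOf, Subgroup.mem_inf,
        Subgroup.coe_inclusion]
      constructor
      · intro h; exact ⟨⟨h, hxK⟩, hx⟩
      · intro h; exact h.1.1
    have hsurj : Function.Surjective f := by
      intro y
      obtain ⟨⟨w, hw⟩, rfl⟩ := QuotientGroup.mk_surjective y
      have hdec : ∀ w ∈ S, ∃ a ∈ A, ∃ m ∈ M, w = a * m := by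
        intro w hw
        rw [hSdef, Subgroup.sup_eq_closure] at hw
        refine Subgroup.closure_induction ?_ ?_ ?_ ?_ hw
        · rintro x (hx | hx)
          · exact ⟨x, hx, 1, one_mem M, by simp⟩
          · exact ⟨1, one_mem A, x, hx, by simp⟩
        · exact ⟨1, one_mem A, 1, one_mem M, by simp⟩
        · rintro x y _ _ ⟨a₁, ha₁, m₁, hm₁, rfl⟩ ⟨a₂, ha₂, m₂, hm₂, rfl⟩
          have hm' : a₂⁻¹ * m₁ * a₂ ∈ M := by
            simpa using hMconjS a₂⁻¹ (inv_mem (haS ha₂)) m₁ hm₁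
          refine ⟨a₁ * a₂, mul_mem ha₁ ha₂, (a₂⁻¹ * m₁ * a₂) * m₂,
            mul_mem hm' hm₂, ?_⟩
          group
        · rintro x _ ⟨a, ha, m, hm, rfl⟩
          refine ⟨a⁻¹, inv_mem ha, a * m⁻¹ * a⁻¹,
            hMconjS a (haS ha) m⁻¹ (inv_mem hm), ?_⟩
          group
      obtain ⟨a, ha, m, hm, rfl⟩ := hdec w hw
      refine ⟨⟨a, hA.symm ▸ ha⟩, ?_⟩
      have heq : (QuotientGroup.mk (⟨a, haS ha⟩ : ↥S) :
          ↥S ⧸ M.subgroupOf S) = QuotientGroup.mk ⟨a * m, hw⟩ := by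
        apply (QuotientGroup.eq).2
        simpa [Subgroup.mem_subgroupOf, mul_assoc] using hm
      simpa [f, QuotientGroup.mk'_apply, Subgroup.inclusion] using heq
    exact ⟨(QuotientGroup.quotientMulEquivOfEq hkerf.symm).trans
      (QuotientGroup.quotientKerEquivOfSurjective f hsurj)⟩
  · -- normality of the image
    have hnorm : (S.subgroupOf T).Normal := by
      constructor
      rintro ⟨n, hnT⟩ hn ⟨g, hgT⟩
      simp only [Subgroup.mem_subgroupOf] at hn ⊢
      have base : ∀ g, (g ∈ conjSub r M ∨ g ∈ M) → ∀ n ∈ S, g * n * g⁻¹ ∈ S := by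
        intro g hg n hn
        rw [hSdef, Subgroup.sup_eq_closure] at hn
        refine Subgroup.closure_induction ?_ ?_ ?_ ?_ hn
        · rintro x (hx | hx)
          · rcases hg with hg | hg
            · refine haS ?_
              rw [hAdef] at hx ⊢
              exact ⟨mul_mem (mul_mem hg hx.1) ((conjSub r M).inv_mem hg),
                Subgroup.Normal.conj_mem ‹K.Normal› _ hx.2 g⟩
            · have h1 : x * g⁻¹ * x⁻¹ ∈ M :=
                hMconjS x (haS hx) g⁻¹ (inv_mem hg)
              have h2 : g * x * g⁻¹ = (g * (x * g⁻¹ * x⁻¹)) * x := by group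
              rw [h2]
              exact mul_mem (hmS (mul_mem hg h1)) (haS hx)
          · have hgT' : g ∈ T := by
              rcases hg with hg | hg
              · exact hcT hg
              · exact hmT hg
            exact hmS (hMconjT g hgT' x hx)
        · simpa using one_mem S
        · intro x y _ _ hx hy
          have h2 : g * (x * y) * g⁻¹ = (g * x * g⁻¹) * (g * y * g⁻¹) := by group
          rw [h2]; exact mul_mem hx hy
        · intro x _ hx
          have h2 : g * x⁻¹ * g⁻¹ = (g * x * g⁻¹)⁻¹ := by group
          rw [h2]; exact inv_mem hx
      have key2 : ∀ g ∈ T, ∀ n ∈ S, g * n * g⁻¹ ∈ S ∧ g⁻¹ * n * g ∈ S := by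
        intro g hg
        rw [hTdef, Subgroup.sup_eq_closure] at hg
        refine Subgroup.closure_induction ?_ ?_ ?_ ?_ hg
        · rintro x (hx | hx) n hn
          · exact ⟨base x (Or.inl hx) n hn,
              by simpa using base x⁻¹ (Or.inl (inv_mem hx)) n hn⟩
          · exact ⟨base x (Or.inr hx) n hn,
              by simpa using base x⁻¹ (Or.inr (inv_mem hx)) n hn⟩
        · intro n hn
          constructor <;> simpa using hn
        · intro x y _ _ hx hy n hn
          constructor
          · have h2 : x * y * n * (x * y)⁻¹ = x * (y * n * y⁻¹) * x⁻¹ := by group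
            rw [h2]; exact (hx _ (hy n hn).1).1
          · have h2 : (x * y)⁻¹ * n * (x * y) = y⁻¹ * (x⁻¹ * n * x) * y := by group
            rw [h2]; exact (hy _ (hx n hn).2).2
        · intro x _ hx n hn
          exact ⟨by simpa using (hx n hn).2, by simpa using (hx n hn).1⟩
      exact (key2 g hgT n hn).1
    exact Subgroup.Normal.map hnorm (QuotientGroup.mk' (M.subgroupOf T))
      (QuotientGroup.mk'_surjective _)
end

section
/- Let W be a group, r an involution in W, W⁺ ⊴ W of index 2 with r ∉ W⁺, and M, K normal subgroups of W⁺. Set N = M ∩ K, Nʳ = rNr⁻¹, N_W = N ∩ Nʳ, and similarly for M and K. Then the quotient Nʳ/N_W embeds into the direct product (rMr⁻¹·M/M) × (rKr⁻¹·K/K); that is, the chirality group of the mix embeds into the direct product of the chirality groups of the components. -/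
theorem conjSub_mono {W : Type} [Group W] (r : W) {M K : Subgroup W} (h : M ≤ K) :
    conjSub r M ≤ conjSub r K := Subgroup.map_mono h

/-- The chirality group of the mix, `Nʳ/(N ∩ Nʳ)` with `N = M ⊓ K`, embeds into the
direct product `(rMr⁻¹·M/M) × (rKr⁻¹·K/K)` of the chirality groups of the components. -/
theorem stmt_9 (W : Type) [Group W] (r : W) (hr : r ^ 2 = 1)
    (Wp : Subgroup W) [Wp.Normal] (hWp : Wp.index = 2) (hrW : r ∉ Wp)
    (M K : Subgroup W) (hMle : M ≤ Wp) (hKle : K ≤ Wp)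
    [(M.subgroupOf Wp).Normal] [(K.subgroupOf Wp).Normal]
    [((M ⊓ K ⊓ conjSub r (M ⊓ K)).subgroupOf (conjSub r (M ⊓ K))).Normal]
    [(M.subgroupOf (conjSub r M ⊔ M)).Normal]
    [(K.subgroupOf (conjSub r K ⊔ K)).Normal] :
    ∃ f : (↥(conjSub r (M ⊓ K)) ⧸
          (M ⊓ K ⊓ conjSub r (M ⊓ K)).subgroupOf (conjSub r (M ⊓ K))) →*
        ((↥(conjSub r M ⊔ M) ⧸ M.subgroupOf (conjSub r M ⊔ M)) ×
         (↥(conjSub r K ⊔ K) ⧸ K.subgroupOf (conjSub r K ⊔ K))),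
      Function.Injective f := by
  have h1 : conjSub r (M ⊓ K) ≤ conjSub r M ⊔ M :=
    le_trans (conjSub_mono r inf_le_left) le_sup_left
  have h2 : conjSub r (M ⊓ K) ≤ conjSub r K ⊔ K :=
    le_trans (conjSub_mono r inf_le_right) le_sup_left
  let g : ↥(conjSub r (M ⊓ K)) →*
      ((↥(conjSub r M ⊔ M) ⧸ M.subgroupOf (conjSub r M ⊔ M)) ×
       (↥(conjSub r K ⊔ K) ⧸ K.subgroupOf (conjSub r K ⊔ K))) :=
    ((QuotientGroup.mk' _).comp (Subgroup.inclusion h1)).prod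
      ((QuotientGroup.mk' _).comp (Subgroup.inclusion h2))
  have hker : (M ⊓ K ⊓ conjSub r (M ⊓ K)).subgroupOf (conjSub r (M ⊓ K)) = g.ker := by
    ext x
    simp only [g, MonoidHom.mem_ker, MonoidHom.prod_apply, Prod.mk_eq_one,
      MonoidHom.comp_apply, QuotientGroup.mk'_apply, QuotientGroup.eq_one_iff,
      Subgroup.mem_subgroupOf, Subgroup.mem_inf]
    constructor
    · rintro ⟨⟨hM, hK⟩, -⟩
      exact ⟨hM, hK⟩
    · rintro ⟨hM, hK⟩
      exact ⟨⟨hM, hK⟩, x.2⟩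
  exact ⟨(QuotientGroup.kerLift g).comp
      (QuotientGroup.quotientMulEquivOfEq hker).toMonoidHom,
    (QuotientGroup.kerLift_injective g).comp
      (QuotientGroup.quotientMulEquivOfEq hker).injective⟩
end

section
/- Let Γ = ⟨σ₁,…,σ_{n-1}⟩ and Λ = ⟨λ₁,…,λ_{n-1}⟩ be groups with n-1 distinguished generators each, where Λ satisfies the intersection property ⟨λ_i : i ∈ I⟩ ∩ ⟨λ_i : i ∈ J⟩ = ⟨λ_i : i ∈ I ∩ J⟩ for all subsets I, J of {1,…,n-1} of the form {i,…,j}. Suppose π : Γ → Λ is a homomorphism with π(σ_j) = λ_j for all j, and π is injective on the subgroup ⟨σ₁,…,σ_{n-2}⟩, which itself satisfies the intersection property. Then for each j with 2 ≤ j ≤ n-1, ⟨σ₁,…,σ_{n-2}⟩ ∩ ⟨σ_j,…,σ_{n-1}⟩ = ⟨σ_j,…,σ_{n-2}⟩. -/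
/-- The subgroup generated by the generators `σ_a, …, σ_b`. -/
def gensIn {G : Type} [Group G] (σ : ℕ → G) (a b : ℕ) : Subgroup G :=
  Subgroup.closure (σ '' {i | a ≤ i ∧ i ≤ b})

/-- Quotient criterion: if `π : Γ → Λ` sends `σ_j` to `λ_j`, `Λ` has the intersection
property, and `π` is injective on `⟨σ₁,…,σ_{n-2}⟩` which itself has the intersection
property, then `⟨σ₁,…,σ_{n-2}⟩ ∩ ⟨σ_j,…,σ_{n-1}⟩ = ⟨σ_j,…,σ_{n-2}⟩` for `2 ≤ j ≤ n-1`. -/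
theorem stmt_12 (n : ℕ) (Γ Λ : Type) [Group Γ] [Group Λ]
    (σ : ℕ → Γ) (lam : ℕ → Λ)
    (hσgen : gensIn σ 1 (n - 1) = ⊤) (hlamgen : gensIn lam 1 (n - 1) = ⊤)
    (hΛint : ∀ i j k l, 1 ≤ i → j ≤ n - 1 → 1 ≤ k → l ≤ n - 1 →
      gensIn lam i j ⊓ gensIn lam k l = gensIn lam (max i k) (min j l))
    (π : Γ →* Λ) (hπ : ∀ j, 1 ≤ j → j ≤ n - 1 → π (σ j) = lam j)
    (hinj : Set.InjOn π (gensIn σ 1 (n - 2) : Set Γ))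
    (hΓint : ∀ i j k l, 1 ≤ i → j ≤ n - 2 → 1 ≤ k → l ≤ n - 2 →
      gensIn σ i j ⊓ gensIn σ k l = gensIn σ (max i k) (min j l)) :
    ∀ j, 2 ≤ j → j ≤ n - 1 →
      gensIn σ 1 (n - 2) ⊓ gensIn σ j (n - 1) = gensIn σ j (n - 2) := by

  intro j hj2 hjn
  have hmap : ∀ a b : ℕ, 1 ≤ a → b ≤ n - 1 →
      (gensIn σ a b).map π = gensIn lam a b := by
    intro a b ha hb
    unfold gensIn
    rw [MonoidHom.map_closure]
    congr 1
    rw [Set.image_image]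
    apply Set.image_congr
    rintro i ⟨hi1, hi2⟩
    exact hπ i (ha.trans hi1) (hi2.trans hb)
  have hmono : ∀ a a' b b' : ℕ, a' ≤ a → b ≤ b' → gensIn σ a b ≤ gensIn σ a' b' := by
    intro a a' b b' ha hb
    exact Subgroup.closure_mono (Set.image_mono (fun i ⟨h1, h2⟩ => ⟨ha.trans h1, h2.trans hb⟩))
  apply le_antisymm
  · intro φ hφ
    have h1 : φ ∈ gensIn σ 1 (n - 2) := hφ.1
    have h2 : φ ∈ gensIn σ j (n - 1) := hφ.2
    have hπφ : π φ ∈ gensIn lam j (n - 2) := by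
      have hint := hΛint 1 (n - 2) j (n - 1) le_rfl (Nat.sub_le_sub_left (by norm_num) n)
        (le_trans (by norm_num) hj2) le_rfl
      have hmax : max 1 j = j := max_eq_right (le_trans (by norm_num) hj2)
      have hmin : min (n - 2) (n - 1) = n - 2 := min_eq_left (Nat.sub_le_sub_left (by norm_num) n)
      rw [hmax, hmin] at hint
      rw [← hint]
      constructor
      · rw [← hmap 1 (n - 2) le_rfl (Nat.sub_le_sub_left (by norm_num) n)]
        exact ⟨φ, h1, rfl⟩
      · rw [← hmap j (n - 1) (le_trans (by norm_num) hj2) le_rfl]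
        exact ⟨φ, h2, rfl⟩
    rw [← hmap j (n - 2) (le_trans (by norm_num) hj2) (Nat.sub_le_sub_left (by norm_num) n)]
      at hπφ
    obtain ⟨ψ, hψ, hψeq⟩ := hπφ
    have hψ1 : ψ ∈ gensIn σ 1 (n - 2) := hmono j 1 (n - 2) (n - 2)
      (le_trans (by norm_num) hj2) le_rfl hψ
    have := hinj hψ1 h1 hψeq
    rwa [← this]
  · exact le_inf (hmono j 1 (n - 2) (n - 2) (le_trans (by norm_num) hj2) le_rfl)
      (hmono j j (n - 2) (n - 1) le_rfl (Nat.sub_le_sub_left (by norm_num) n))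
end

section
/- Let n ≥ 4 and let Γ = ⟨σ₁,…,σ_{n-1}⟩ be a group such that the subgroup Γ_{n-1} = ⟨σ₁,…,σ_{n-2}⟩ satisfies the intersection property for consecutive ranges (⟨σ_i,…,σ_j⟩ ∩ ⟨σ_k,…,σ_l⟩ = ⟨σ_max(i,k),…,σ_min(j,l)⟩ for all valid ranges within {1,…,n-2}), and suppose Γ_{n-1} ∩ ⟨σ_j,…,σ_{n-1}⟩ = ⟨σ_j,…,σ_{n-2}⟩ for j = 2,…,n-1. Then for all 1 ≤ i ≤ j ≤ n-1 and 1 ≤ k ≤ l ≤ n-1, ⟨σ_i,…,σ_j⟩ ∩ ⟨σ_k,…,σ_l⟩ = ⟨σ_m : max(i,k) ≤ m ≤ min(j,l)⟩ (interpreted as the trivial group when the range is empty). -/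
lemma gensIn_mono {G : Type} [Group G] (σ : ℕ → G) {a b c d : ℕ}
    (h1 : c ≤ a) (h2 : b ≤ d) : gensIn σ a b ≤ gensIn σ c d :=
  Subgroup.closure_mono (Set.image_mono fun i hi => ⟨le_trans h1 hi.1, le_trans hi.2 h2⟩)

/-- Lemma 3.1: if `⟨σ₁,…,σ_{n-2}⟩` satisfies the intersection property for consecutive
ranges and `⟨σ₁,…,σ_{n-2}⟩ ∩ ⟨σ_j,…,σ_{n-1}⟩ = ⟨σ_j,…,σ_{n-2}⟩` for `j = 2,…,n-1`,
then the full intersection property for consecutive ranges holds in `Γ`. -/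
theorem stmt_15 (n : ℕ) (hn : 4 ≤ n) (Γ : Type) [Group Γ] (σ : ℕ → Γ)
    (hgen : gensIn σ 1 (n - 1) = ⊤)
    (hrel : ∀ i j, 1 ≤ i → i < j → j ≤ n - 1 →
      (((List.range' i (j - i + 1)).map σ).prod) ^ 2 = 1)
    (hsub : ∀ i j k l, 1 ≤ i → j ≤ n - 2 → 1 ≤ k → l ≤ n - 2 →
      gensIn σ i j ⊓ gensIn σ k l = gensIn σ (max i k) (min j l))
    (hcond : ∀ j, 2 ≤ j → j ≤ n - 1 →
      gensIn σ 1 (n - 2) ⊓ gensIn σ j (n - 1) = gensIn σ j (n - 2)) :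
    ∀ i j k l, 1 ≤ i → i ≤ j → j ≤ n - 1 → 1 ≤ k → k ≤ l → l ≤ n - 1 →
      gensIn σ i j ⊓ gensIn σ k l = gensIn σ (max i k) (min j l) := by
  -- Key asymmetric case: right range ends at `n-1`, left range ends at `l ≤ n-2`.
  have key : ∀ i k l, 1 ≤ i → i ≤ n - 1 → 1 ≤ k → l ≤ n - 2 →
      gensIn σ i (n - 1) ⊓ gensIn σ k l ≤ gensIn σ (max i k) l := by
    intro i k l hi hin hk hl
    rcases eq_or_lt_of_le hi with h1 | h2
    · -- i = 1
      rw [← h1, hgen, top_inf_eq, max_eq_right hk]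
    · -- 2 ≤ i
      have h2i : 2 ≤ i := h2
      have hkl1 : gensIn σ k l ≤ gensIn σ 1 (n - 2) := gensIn_mono σ hk hl
      calc gensIn σ i (n - 1) ⊓ gensIn σ k l
          ≤ (gensIn σ 1 (n - 2) ⊓ gensIn σ i (n - 1)) ⊓ gensIn σ k l :=
            le_inf (le_inf (inf_le_right.trans hkl1) inf_le_left) inf_le_right
        _ = gensIn σ i (n - 2) ⊓ gensIn σ k l := by rw [hcond i h2i hin]
        _ = gensIn σ (max i k) (min (n - 2) l) := hsub i (n - 2) k l hi le_rfl hk hl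
        _ = gensIn σ (max i k) l := by rw [min_eq_right hl]
  intro i j k l hi hij hjn hk hkl hln
  refine le_antisymm ?_ (le_inf
    (gensIn_mono σ (le_max_left i k) (min_le_left j l))
    (gensIn_mono σ (le_max_right i k) (min_le_right j l)))
  by_cases hj2 : j ≤ n - 2
  · by_cases hl2 : l ≤ n - 2
    · exact (hsub i j k l hi hj2 hk hl2).le
    · -- l = n - 1
      have hl1 : l = n - 1 := by omega
      have hminjl : min j l = j := by omega
      have := key k i j hk (by omega) hi hj2
      rw [hminjl, hl1, max_comm i k]
      calc gensIn σ i j ⊓ gensIn σ k (n - 1) = gensIn σ k (n - 1) ⊓ gensIn σ i j := inf_comm _ _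
        _ ≤ gensIn σ (max k i) j := this
  · -- j = n - 1
    have hj1 : j = n - 1 := by omega
    by_cases hl2 : l ≤ n - 2
    · have hminjl : min j l = l := by omega
      rw [hminjl, hj1]
      exact key i k l hi (by omega) hk hl2
    · -- both j = l = n - 1
      have hl1 : l = n - 1 := by omega
      have hminjl : min j l = n - 1 := by omega
      rw [hminjl]
      rcases le_total i k with h | h
      · rw [max_eq_right h, ← hl1]; exact inf_le_right
      · rw [max_eq_left h, ← hj1]; exact inf_le_left
end

section
/- Let Γ be a group generated by σ₁,…,σ_{n-1}, presented as a quotient W⁺/M of the free-like group W⁺ (the rotation subgroup of the universal string Coxeter group on n generators r₀,…,r_{n-1}), where M is the normal closure in W⁺ of a set of relators R. Then rMr⁻¹ (for r = r₀) equals the normal closure in W⁺ of the set Rʳ obtained from R by substituting s₁ ↦ s₁⁻¹, s₂ ↦ s₁²s₂, and s_j ↦ s_j for j ≥ 3, where s_i = r_{i-1}r_i. Consequently, the chirality group X = M·rMr⁻¹/M equals the normal closure in Γ = W⁺/M of the image of Rʳ. -/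
/-- The normal closure of a set `R` inside the subgroup `Wp`: the smallest subgroup
of the ambient group containing `R` and normalized by `Wp`. -/
def normalClosureIn {W : Type} [Group W] (Wp : Subgroup W) (R : Set W) : Subgroup W :=
  sInf {H : Subgroup W | R ⊆ ↑H ∧ ∀ g ∈ Wp, ∀ x ∈ H, g * x * g⁻¹ ∈ H}

/-- The substitution on words in the generators `s₁, s₂, s₃, …` (here `0`-indexed as
`s 0, s 1, s 2, …`) given by `s₁ ↦ s₁⁻¹`, `s₂ ↦ s₁² s₂`, `s_j ↦ s_j` for `j ≥ 3`. -/
def chiralSub : FreeGroup ℕ →* FreeGroup ℕ :=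
  FreeGroup.lift fun j =>
    if j = 0 then (FreeGroup.of 0)⁻¹
    else if j = 1 then (FreeGroup.of 0) ^ 2 * FreeGroup.of 1
    else FreeGroup.of j

/-- The rotation subgroup `W⁺`, generated by the `s_i`. -/
def WpOf {W : Type} [Group W] (s : ℕ → W) : Subgroup W :=
  Subgroup.closure (Set.range s)

/-- `M`, the normal closure in `W⁺` of the evaluated relators `R`. -/
def MOf {W : Type} [Group W] (s : ℕ → W) (R : Set (FreeGroup ℕ)) : Subgroup W :=
  normalClosureIn (WpOf s) (FreeGroup.lift s '' R)

section Aux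

variable {W : Type} [Group W] (Wp : Subgroup W) (S : Set W)

lemma ncIn_mem_set :
    normalClosureIn Wp S ∈
      {H : Subgroup W | S ⊆ ↑H ∧ ∀ g ∈ Wp, ∀ x ∈ H, g * x * g⁻¹ ∈ H} := by
  constructor
  · intro x hx
    exact Subgroup.mem_sInf.2 fun H hH => hH.1 hx
  · intro g hg x hx
    exact Subgroup.mem_sInf.2 fun H hH =>
      hH.2 g hg x (Subgroup.mem_sInf.1 hx H hH)

lemma ncIn_le {H : Subgroup W}
    (h : S ⊆ ↑H ∧ ∀ g ∈ Wp, ∀ x ∈ H, g * x * g⁻¹ ∈ H) :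
    normalClosureIn Wp S ≤ H := sInf_le h

lemma ncIn_le_wp (hS : S ⊆ ↑Wp) : normalClosureIn Wp S ≤ Wp :=
  ncIn_le Wp S ⟨hS, fun g hg x hx => Subgroup.mul_mem _ (Subgroup.mul_mem _ hg hx)
    (Subgroup.inv_mem _ hg)⟩

/-- Mapping a normal closure in `Wp` through an automorphism preserving `Wp`. -/
lemma map_ncIn (φ : W ≃* W) (hWp : Subgroup.map (φ : W →* W) Wp = Wp) :
    Subgroup.map (φ : W →* W) (normalClosureIn Wp S) = normalClosureIn Wp (φ '' S) := by
  have key : ∀ (ψ : W ≃* W), Subgroup.map (ψ : W →* W) Wp = Wp → ∀ T : Set W,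
      Subgroup.map (ψ : W →* W) (normalClosureIn Wp T) ≤ normalClosureIn Wp (ψ '' T) := by
    intro ψ hψ T
    rw [Subgroup.map_le_iff_le_comap]
    refine ncIn_le Wp T ⟨?_, ?_⟩
    · intro x hx
      exact (ncIn_mem_set Wp (ψ '' T)).1 ⟨x, hx, rfl⟩
    · intro g hg x hx
      have hgm : ψ g ∈ Wp := hψ ▸ Subgroup.mem_map_of_mem _ hg
      have := (ncIn_mem_set Wp (ψ '' T)).2 (ψ g) hgm (ψ x) hx
      simpa [Subgroup.mem_comap, map_mul, map_inv] using this
  have hWp' : Subgroup.map (φ.symm : W →* W) Wp = Wp := by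
    conv_lhs => rw [← hWp]
    ext x
    simp [Subgroup.mem_map]
  refine le_antisymm (key φ hWp S) ?_
  have h2 := key φ.symm hWp' (φ '' S)
  have hset : φ.symm '' (φ '' S) = S := by
    ext x; simp
  rw [hset] at h2
  intro x hx
  have : φ.symm x ∈ normalClosureIn Wp S := h2 (Subgroup.mem_map_of_mem _ hx)
  exact ⟨φ.symm x, this, by simp⟩

/-- A normal closure in `Wp` of a subset of `Wp` is the image of the intrinsic
normal closure inside `Wp`. -/
lemma ncIn_eq_map (hS : S ⊆ ↑Wp) :
    normalClosureIn Wp S =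
      Subgroup.map Wp.subtype (Subgroup.normalClosure ((Wp.subtype) ⁻¹' S)) := by
  refine le_antisymm ?_ ?_
  · refine ncIn_le Wp S ⟨?_, ?_⟩
    · intro x hx
      exact ⟨⟨x, hS hx⟩, Subgroup.subset_normalClosure hx, rfl⟩
    · rintro g hg x ⟨y, hy, rfl⟩
      refine ⟨⟨g, hg⟩ * y * ⟨g, hg⟩⁻¹, Subgroup.normalClosure_normal.conj_mem y hy ⟨g, hg⟩, rfl⟩
  · rw [Subgroup.map_le_iff_le_comap]
    have : Subgroup.Normal ((normalClosureIn Wp S).comap Wp.subtype) := by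
      constructor
      rintro ⟨n, hn⟩ hmem ⟨g, hg⟩
      have := (ncIn_mem_set Wp S).2 g hg n hmem
      simpa [Subgroup.mem_comap, Subgroup.mem_subgroupOf] using this
    refine Subgroup.normalClosure_le_normal ?_
    intro x hx
    simpa [Subgroup.mem_comap, Subgroup.mem_subgroupOf] using (ncIn_mem_set Wp S).1 hx

end Aux

/-- `r₀ M r₀⁻¹` is the normal closure in `W⁺` of the substituted relators `Rʳ`, and
the chirality group `M·r₀Mr₀⁻¹/M` is the normal closure in `Γ = W⁺/M` of the image
of `Rʳ`. -/
theorem stmt_17 (W : Type) [Group W] (r₀ : W) (hr : r₀ ^ 2 = 1) (s : ℕ → W)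
    (h0 : r₀ * s 0 * r₀⁻¹ = (s 0)⁻¹)
    (h1 : r₀ * s 1 * r₀⁻¹ = s 0 ^ 2 * s 1)
    (h2 : ∀ j, 2 ≤ j → r₀ * s j * r₀⁻¹ = s j)
    (R : Set (FreeGroup ℕ))
    [((MOf s R).subgroupOf (WpOf s)).Normal] :
    Subgroup.map (MulAut.conj r₀).toMonoidHom (MOf s R) =
      normalClosureIn (WpOf s) (FreeGroup.lift s '' (chiralSub '' R)) ∧
    Subgroup.map (QuotientGroup.mk' ((MOf s R).subgroupOf (WpOf s)))
        (((MOf s R) ⊔ Subgroup.map (MulAut.conj r₀).toMonoidHom (MOf s R)).subgroupOf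
          (WpOf s)) =
      Subgroup.normalClosure
        ((QuotientGroup.mk' ((MOf s R).subgroupOf (WpOf s))) ''
          {x : ↥(WpOf s) | (x : W) ∈ FreeGroup.lift s '' (chiralSub '' R)}) := by
  set φ : W ≃* W := MulAut.conj r₀ with hφdef
  -- conj r₀ on generators
  have hφ0 : φ (s 0) = (s 0)⁻¹ := h0
  have hφ1 : φ (s 1) = s 0 ^ 2 * s 1 := h1
  have hφj : ∀ j, 2 ≤ j → φ (s j) = s j := h2
  -- φ maps Wp into Wp
  have hφWpLe : Subgroup.map (φ : W →* W) (WpOf s) ≤ WpOf s := by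
    rw [WpOf, MonoidHom.map_closure, Subgroup.closure_le]
    rintro x ⟨y, ⟨j, rfl⟩, rfl⟩
    match j, Nat.lt_or_ge j 2 with
    | 0, _ =>
      simpa [hφ0] using Subgroup.inv_mem (Subgroup.closure (Set.range s))
        (Subgroup.subset_closure (Set.mem_range_self 0))
    | 1, _ =>
      rw [show (φ : W →* W) (s 1) = s 0 ^ 2 * s 1 from hφ1]
      exact Subgroup.mul_mem _ (Subgroup.pow_mem _ (Subgroup.subset_closure (Set.mem_range_self 0)) 2)
        (Subgroup.subset_closure (Set.mem_range_self 1))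
    | (k+2), _ =>
      rw [show (φ : W →* W) (s (k+2)) = s (k+2) from hφj _ (by omega)]
      exact Subgroup.subset_closure (Set.mem_range_self (k+2))
  have hφφ : ∀ x : W, φ (φ x) = x := by
    intro x
    have : r₀ * r₀ = 1 := by rw [← pow_two]; exact hr
    simp only [hφdef, MulAut.conj_apply]
    calc r₀ * (r₀ * x * r₀⁻¹) * r₀⁻¹ = (r₀ * r₀) * x * (r₀ * r₀)⁻¹ := by group
    _ = x := by rw [this]; simp
  have hφWp : Subgroup.map (φ : W →* W) (WpOf s) = WpOf s := by
    refine le_antisymm hφWpLe ?_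
    intro x hx
    refine ⟨φ x, hφWpLe ⟨x, hx, rfl⟩, hφφ x⟩
  -- the evaluated substituted relators are the φ-image of the evaluated relators
  have hcomp : (FreeGroup.lift s).comp chiralSub = (φ : W →* W).comp (FreeGroup.lift s) := by
    apply FreeGroup.ext_hom
    intro j
    match j, Nat.lt_or_ge j 2 with
    | 0, _ => simp [chiralSub, hφ0]
    | 1, _ => simp [chiralSub, hφ1]
    | (k+2), _ =>
      simp [chiralSub, hφj (k+2) (by omega)]
  have hset : FreeGroup.lift s '' (chiralSub '' R) = φ '' (FreeGroup.lift s '' R) := by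
    rw [Set.image_image, Set.image_image]
    apply Set.image_congr'
    intro x
    exact congrFun (congrArg DFunLike.coe hcomp) x
  -- part 1
  have part1 : Subgroup.map (MulAut.conj r₀).toMonoidHom (MOf s R) =
      normalClosureIn (WpOf s) (FreeGroup.lift s '' (chiralSub '' R)) := by
    rw [hset, MOf]
    exact map_ncIn (WpOf s) _ φ hφWp
  refine ⟨part1, ?_⟩
  -- part 2
  set Wp := WpOf s
  set Mset : Set W := FreeGroup.lift s '' R with hMset
  set S' : Set W := FreeGroup.lift s '' (chiralSub '' R) with hS'
  have hlift : ∀ y : FreeGroup ℕ, FreeGroup.lift s y ∈ Wp := by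
    intro y
    induction y using FreeGroup.induction_on with
    | C1 => simpa using Subgroup.one_mem Wp
    | of j =>
      show FreeGroup.lift s (FreeGroup.of j) ∈ Wp
      rw [FreeGroup.lift_apply_of]
      exact Subgroup.subset_closure ⟨j, rfl⟩
    | inv_of y hy => simpa using Subgroup.inv_mem _ hy
    | mul y z hy hz => simpa using Subgroup.mul_mem _ hy hz
  have hMsetWp : Mset ⊆ ↑Wp := by
    rintro x ⟨y, _, rfl⟩
    exact hlift y
  have hS'Wp : S' ⊆ ↑Wp := by
    rw [hset]
    rintro x ⟨y, hy, rfl⟩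
    rw [← hφWp]
    exact ⟨y, hMsetWp hy, rfl⟩
  have hMle : MOf s R ≤ Wp := ncIn_le_wp Wp Mset hMsetWp
  set M' := Subgroup.map (MulAut.conj r₀).toMonoidHom (MOf s R) with hM'
  have hM'eq : M' = normalClosureIn Wp S' := part1
  have hM'le : M' ≤ Wp := hM'eq ▸ ncIn_le_wp Wp S' hS'Wp
  set T : Set ↥Wp := (Wp.subtype) ⁻¹' S' with hT
  have hM'map : M' = Subgroup.map Wp.subtype (Subgroup.normalClosure T) := by
    rw [hM'eq]; exact ncIn_eq_map Wp S' hS'Wp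
  -- subgroupOf distributes
  have hsup : ((MOf s R) ⊔ M').subgroupOf Wp =
      (MOf s R).subgroupOf Wp ⊔ M'.subgroupOf Wp := by
    apply Subgroup.map_injective Wp.subtype_injective
    rw [Subgroup.map_sup, Subgroup.subgroupOf_map_subtype, Subgroup.subgroupOf_map_subtype,
      Subgroup.subgroupOf_map_subtype, inf_eq_left.2 (sup_le hMle hM'le),
      inf_eq_left.2 hMle, inf_eq_left.2 hM'le]
  have hM'sub : M'.subgroupOf Wp = Subgroup.normalClosure T := by
    rw [Subgroup.subgroupOf, hM'map,
      Subgroup.comap_map_eq_self_of_injective Wp.subtype_injective]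
  rw [hsup, Subgroup.map_sup, hM'sub,
    (Subgroup.map_eq_bot_iff _).2 (le_of_eq (QuotientGroup.ker_mk' _).symm), bot_sup_eq,
    Subgroup.map_normalClosure _ _ (QuotientGroup.mk'_surjective _)]
  rfl
end

section
/- Let W be a group, W⁺ ⊴ W of index 2, r an involution in W \ W⁺, and M, K ⊴ W⁺ with K also normal in W. If M·(rMr⁻¹) = W⁺ (P totally chiral), M ∩ K ≤ rMr⁻¹ (the mix is 'regular'), and the groups W⁺/M and W⁺/K have no nontrivial common quotient, then the group W⁺/(M ∩ K), which is isomorphic to (W⁺/M) × (W⁺/K), has a quotient isomorphic to (W⁺/M) × (W⁺/M). -/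
/-- If two subgroups of `Wp` are both ≤ `Wp` and their join is `Wp`, then the join of their
`subgroupOf`s is `⊤`. -/
lemma subgroupOf_sup_eq_top {W : Type} [Group W] (Wp A B : Subgroup W)
    (hA : A ≤ Wp) (hB : B ≤ Wp) (h : A ⊔ B = Wp) :
    A.subgroupOf Wp ⊔ B.subgroupOf Wp = ⊤ := by
  apply Subgroup.map_injective Wp.subtype_injective
  rw [Subgroup.map_sup, Subgroup.subgroupOf_map_subtype, Subgroup.subgroupOf_map_subtype,
    inf_of_le_left hA, inf_of_le_left hB, h]
  rw [← MonoidHom.range_eq_map, Subgroup.range_subtype]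

/-- Surjectivity of a pair of quotient maps, given that the two kernels join to ⊤
and the first is normal. -/
lemma pair_surj {G : Type} [Group G] (A B : Subgroup G) [A.Normal] (h : A ⊔ B = ⊤)
    (a b : G) : ∃ w : G, a⁻¹ * w ∈ A ∧ b⁻¹ * w ∈ B := by
  have hab : a⁻¹ * b ∈ A ⊔ B := by rw [h]; trivial
  rw [← SetLike.mem_coe, Subgroup.normal_mul] at hab
  obtain ⟨m, hm, k, hk, hmk⟩ := hab
  have hmk' : m * k = a⁻¹ * b := hmk
  refine ⟨a * m, by simpa using hm, ?_⟩
  have hb : b = a * m * k := by rw [mul_assoc, hmk']; group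
  have hk2 : b⁻¹ * (a * m) = k⁻¹ := by rw [hb]; group
  rw [hk2]
  exact B.inv_mem hk

/-- If `M·(rMr⁻¹) = W⁺` (total chirality), `M ∩ K ≤ rMr⁻¹` (the mix is regular), and
`W⁺/M`, `W⁺/K` have no nontrivial common quotient, then
`W⁺/(M ∩ K) ≅ (W⁺/M) × (W⁺/K)` has a quotient isomorphic to `(W⁺/M) × (W⁺/M)`. -/
theorem stmt_19 (W : Type) [Group W] (r : W) (hr : r ^ 2 = 1)
    (Wp : Subgroup W) [Wp.Normal] (hWp : Wp.index = 2) (hrW : r ∉ Wp)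
    (M K : Subgroup W) (hMle : M ≤ Wp) (hKle : K ≤ Wp)
    [(M.subgroupOf Wp).Normal] [K.Normal]
    [(K.subgroupOf Wp).Normal] [((M ⊓ K).subgroupOf Wp).Normal]
    (htc : M ⊔ conjSub r M = Wp)
    (hreg : M ⊓ K ≤ conjSub r M)
    (hq : ∀ (Q : Type) [Group Q] (f : (↥Wp ⧸ M.subgroupOf Wp) →* Q)
        (g : (↥Wp ⧸ K.subgroupOf Wp) →* Q),
        Function.Surjective f → Function.Surjective g → Subsingleton Q) :
    Nonempty ((↥Wp ⧸ (M ⊓ K).subgroupOf Wp) ≃*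
        ((↥Wp ⧸ M.subgroupOf Wp) × (↥Wp ⧸ K.subgroupOf Wp))) ∧
    ∃ f : (↥Wp ⧸ (M ⊓ K).subgroupOf Wp) →*
        ((↥Wp ⧸ M.subgroupOf Wp) × (↥Wp ⧸ M.subgroupOf Wp)),
      Function.Surjective f := by
  set M' := M.subgroupOf Wp with hM'
  set K' := K.subgroupOf Wp with hK'
  -- Step 1 : M' ⊔ K' = ⊤, via the no-common-quotient hypothesis
  have hsupMK : M' ⊔ K' = ⊤ := by
    set J := M' ⊔ K' with hJ
    have hfs : Function.Surjective
        (QuotientGroup.map M' J (MonoidHom.id _) (by rw [Subgroup.comap_id]; exact le_sup_left)) :=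
      fun q => by
        obtain ⟨x, rfl⟩ := QuotientGroup.mk_surjective q
        exact ⟨QuotientGroup.mk x, rfl⟩
    have hgs : Function.Surjective
        (QuotientGroup.map K' J (MonoidHom.id _) (by rw [Subgroup.comap_id]; exact le_sup_right)) :=
      fun q => by
        obtain ⟨x, rfl⟩ := QuotientGroup.mk_surjective q
        exact ⟨QuotientGroup.mk x, rfl⟩
    have hsub := hq _ _ _ hfs hgs
    rw [eq_top_iff]
    intro x _
    have : (QuotientGroup.mk x : ↥Wp ⧸ J) = QuotientGroup.mk 1 := Subsingleton.elim _ _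
    simpa [QuotientGroup.eq] using this
  -- Part 1 : the isomorphism
  have part1 : Nonempty ((↥Wp ⧸ (M ⊓ K).subgroupOf Wp) ≃* ((↥Wp ⧸ M') × (↥Wp ⧸ K'))) := by
    set φ : ↥Wp →* (↥Wp ⧸ M') × (↥Wp ⧸ K') :=
      (QuotientGroup.mk' M').prod (QuotientGroup.mk' K') with hφ
    have hker : φ.ker = (M ⊓ K).subgroupOf Wp := by
      rw [hφ, MonoidHom.ker_prod, QuotientGroup.ker_mk', QuotientGroup.ker_mk']
      ext x
      simp only [hM', hK', Subgroup.mem_inf, Subgroup.mem_subgroupOf]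
    have hsurj : Function.Surjective φ := by
      rintro ⟨qa, qb⟩
      obtain ⟨a, rfl⟩ := QuotientGroup.mk_surjective qa
      obtain ⟨b, rfl⟩ := QuotientGroup.mk_surjective qb
      obtain ⟨w, hw1, hw2⟩ := pair_surj M' K' hsupMK a b
      exact ⟨w, by
        rw [hφ]
        simp only [MonoidHom.prod_apply, QuotientGroup.mk'_apply, Prod.mk.injEq]
        constructor
        · exact (QuotientGroup.eq.mpr hw1).symm
        · exact (QuotientGroup.eq.mpr hw2).symm⟩
    exact ⟨(QuotientGroup.quotientMulEquivOfEq hker.symm).trans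
      (QuotientGroup.quotientKerEquivOfSurjective φ hsurj)⟩
  refine ⟨part1, ?_⟩
  -- Part 2 : the surjection onto (Wp/M) × (Wp/M)
  set C := conjSub r M with hC
  have hCle : C ≤ Wp := by
    rintro x ⟨m, hm, rfl⟩
    exact Subgroup.Normal.conj_mem ‹Wp.Normal› m (hMle hm) r
  set C' := C.subgroupOf Wp with hC'
  have hsupMC : M' ⊔ C' = ⊤ := subgroupOf_sup_eq_top Wp M C hMle hCle htc
  -- the second component: x ↦ r⁻¹ x r mod M
  have hconj : ∀ x : ↥Wp, ((MulAut.conj r⁻¹).toMonoidHom.domRestrict Wp) x ∈ Wp :=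
    fun x => Subgroup.Normal.conj_mem ‹Wp.Normal› x.1 x.2 r⁻¹
  set ψ₂ : ↥Wp →* ↥Wp ⧸ M' :=
    (QuotientGroup.mk' M').comp
      (((MulAut.conj r⁻¹).toMonoidHom.domRestrict Wp).codRestrict Wp hconj) with hψ₂
  set ψ : ↥Wp →* (↥Wp ⧸ M') × (↥Wp ⧸ M') := (QuotientGroup.mk' M').prod ψ₂ with hψ
  have hmemC : ∀ x : ↥Wp, x ∈ C' ↔ r⁻¹ * (x : W) * r ∈ M := by
    intro x
    rw [hC', Subgroup.mem_subgroupOf, hC]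
    constructor
    · rintro ⟨m, hm, hx⟩
      have : (x : W) = r * m * r⁻¹ := by simpa [conjSub, MulAut.conj] using hx.symm
      rw [this]
      group
      simpa using hm
    · intro h
      refine ⟨r⁻¹ * (x : W) * r, h, ?_⟩
      simp [MulAut.conj]
      group
  have hkerle : (M ⊓ K).subgroupOf Wp ≤ ψ.ker := by
    intro x hx
    have hx' : (x : W) ∈ M ⊓ K := hx
    have hxC : x ∈ C' := by rw [hC', Subgroup.mem_subgroupOf]; exact hreg hx'
    have hxM : x ∈ M' := by rw [hM', Subgroup.mem_subgroupOf]; exact hx'.1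
    rw [hψ, MonoidHom.mem_ker, MonoidHom.prod_apply, Prod.mk_eq_one]
    constructor
    · simpa [QuotientGroup.eq_one_iff] using hxM
    · rw [hψ₂]
      simp only [MonoidHom.comp_apply, QuotientGroup.mk'_apply, QuotientGroup.eq_one_iff]
      rw [hM', Subgroup.mem_subgroupOf]
      simpa [MulAut.conj] using (hmemC x).mp hxC
  have hψsurj : Function.Surjective ψ := by
    rintro ⟨qa, qb⟩
    obtain ⟨a, rfl⟩ := QuotientGroup.mk_surjective qa
    obtain ⟨b, rfl⟩ := QuotientGroup.mk_surjective qb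
    set c : ↥Wp := ⟨r * (b : W) * r⁻¹, by
      simpa using Subgroup.Normal.conj_mem ‹Wp.Normal› b b.2 r⟩ with hc
    obtain ⟨w, hw1, hw2⟩ := pair_surj M' C' hsupMC a c
    refine ⟨w, ?_⟩
    rw [hψ]
    simp only [MonoidHom.prod_apply, QuotientGroup.mk'_apply, Prod.mk.injEq]
    constructor
    · exact (QuotientGroup.eq.mpr hw1).symm
    · rw [hψ₂]
      simp only [MonoidHom.comp_apply, QuotientGroup.mk'_apply]
      symm
      rw [QuotientGroup.eq]
      rw [hM', Subgroup.mem_subgroupOf]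
      have := (hmemC (c⁻¹ * w)).mp hw2
      have hcoe : ((b⁻¹ *
          (((MulAut.conj r⁻¹).toMonoidHom.domRestrict Wp).codRestrict Wp
            hconj w) : ↥Wp) : W)
          = r⁻¹ * ((c⁻¹ * w : ↥Wp) : W) * r := by
        push_cast
        simp [MulAut.conj, hc]
        group
      rw [hcoe]
      exact this
  exact ⟨(QuotientGroup.lift _ ψ hkerle),
    fun q => by
      obtain ⟨x, hx⟩ := hψsurj q
      exact ⟨QuotientGroup.mk x, by simpa using hx⟩⟩
end
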